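/- arXiv:1005.0005 — 4 statements merged into one kernel-verified Lean document; each statement's English description precedes it below -/
import Mathlib

section
/- Let d ≥ 1, let w = (1,1,…,1)ᵀ/√d ∈ ℝ^d, let Q = -k·I for some real k, and define P = α(I - wwᵀ) + α(1-d)wwᵀ with α ≥ k. Then every diagonal entry of P is zero and (I - wwᵀ)(Q + P)(I - wwᵀ) = (α - k)(I - wwᵀ), which is positive semidefinite. -/
open Matrix Real

lemma psd_smul {d : ℕ} (c : ℝ) (hc : 0 ≤ c) {M : Matrix (Fin d) (Fin d) ℝ}
    (hM : M.PosSemidef) : (c • M).PosSemidef := by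
  refine ⟨?_, fun x => ?_⟩
  · unfold Matrix.IsHermitian
    rw [conjTranspose_smul, hM.1]
    simp
  · have h := mul_nonneg hc (hM.2 x)
    refine le_of_le_of_eq h ?_
    rw [Finsupp.mul_sum]
    refine Finsupp.sum_congr fun i _ => ?_
    rw [Finsupp.mul_sum]
    refine Finsupp.sum_congr fun j _ => ?_
    simp only [Matrix.smul_apply, smul_eq_mul]
    ring

/-- With `w = (1,…,1)ᵀ/√d`, `Q = -k·I`, and
`P = α(I - wwᵀ) + α(1-d)wwᵀ` for `α ≥ k`, every diagonal entry of `P` is zero and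
`(I - wwᵀ)(Q + P)(I - wwᵀ) = (α - k)(I - wwᵀ)`, which is positive semidefinite. -/
theorem stmt0 (d : ℕ) (hd : 1 ≤ d) (k α : ℝ) (hαk : k ≤ α)
    (w : Fin d → ℝ) (hw : w = fun _ => 1 / Real.sqrt d) :
    let wwT : Matrix (Fin d) (Fin d) ℝ := vecMulVec w w
    let Q : Matrix (Fin d) (Fin d) ℝ := (-k) • (1 : Matrix (Fin d) (Fin d) ℝ)
    let P : Matrix (Fin d) (Fin d) ℝ := α • ((1 : Matrix (Fin d) (Fin d) ℝ) - wwT)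
      + (α * (1 - (d : ℝ))) • wwT
    (∀ i, P i i = 0) ∧
    ((1 - wwT) * (Q + P) * (1 - wwT) = (α - k) • (1 - wwT)) ∧
    ((α - k) • ((1 : Matrix (Fin d) (Fin d) ℝ) - wwT)).PosSemidef := by
  intro wwT Q P
  have hd0 : (0:ℝ) < d := by exact_mod_cast Nat.lt_of_lt_of_le Nat.zero_lt_one hd
  have hwi : ∀ i j, wwT i j = 1 / d := by
    intro i j
    simp only [wwT, vecMulVec_apply, hw]
    rw [div_mul_div_comm, one_mul, Real.mul_self_sqrt hd0.le]
  have hidem : wwT * wwT = wwT := by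
    ext i j
    simp only [mul_apply, hwi]
    rw [Finset.sum_const]
    simp
    field_simp
  have hproj : (1 - wwT) * (1 - wwT) = 1 - wwT := by
    rw [sub_mul, mul_sub, mul_sub, one_mul, mul_one, hidem, one_mul, sub_self, sub_zero]
  have hzero : (1 - wwT) * wwT = 0 := by
    rw [sub_mul, one_mul, hidem, sub_self]
  refine ⟨?_, ?_, ?_⟩
  · intro i
    simp only [P, Matrix.add_apply, Matrix.smul_apply, Matrix.sub_apply, Matrix.one_apply_eq,
      hwi, smul_eq_mul]
    field_simp
    ring
  · have : (1 - wwT) * (Q + P) = (α - k) • (1 - wwT) := by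
      simp only [Q, P]
      rw [mul_add, mul_add, Matrix.mul_smul, Matrix.mul_smul, Matrix.mul_smul, mul_one,
        mul_sub, mul_one, hzero]
      rw [sub_zero, smul_zero, add_zero, sub_smul]
      module
    rw [this, Matrix.smul_mul, hproj]
  · apply psd_smul _ (by linarith)
    have : (1 : Matrix (Fin d) (Fin d) ℝ) - wwT = (1 - wwT)ᴴ * (1 - wwT) := by
      have hherm : (1 - wwT)ᴴ = 1 - wwT := by
        ext i j
        simp [hwi, Matrix.one_apply, eq_comm]
      rw [hherm, hproj]
    rw [this]
    exact posSemidef_conjTranspose_mul_self _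
end

section
/- Let L = 2π ∑_{i,j} Q_{ij}|i,i⟩⟨j,j| + 2π ∑_{i≠j} P_{ij}|i,j⟩⟨i,j| with Q, P real, and let ω be the projector onto |ω⟩ = (1/√d)∑_i|i,i⟩. Then the conditional complete positivity condition (I-ω)L^Γ(I-ω) ≥ 0 holds if and only if (a) Q_{ij} ≥ 0 for all i ≠ j, and (b) (I - wwᵀ)M(I - wwᵀ) ≥ 0, where M is the d×d matrix with M_{ii} = Q_{ii} and M_{ij} = P_{ij} for i ≠ j, and w = (1,…,1)ᵀ/√d. -/
open Matrix Real ComplexOrder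



lemma aux_psd_smul {n : Type*} [Fintype n] {A : Matrix n n ℂ} {c : ℝ} (hc : 0 ≤ c)
    (hA : A.PosSemidef) : ((c : ℂ) • A).PosSemidef := by
  rw [Matrix.posSemidef_iff_dotProduct_mulVec] at hA ⊢
  constructor
  · unfold Matrix.IsHermitian
    rw [conjTranspose_smul, hA.1.eq]
    simp [Complex.star_def, Complex.conj_ofReal]
  · intro x
    simp only [Matrix.smul_mulVec, dotProduct_smul, smul_eq_mul]
    exact mul_nonneg (by exact_mod_cast hc) (hA.2 x)

lemma aux_psd_smul_iff {n : Type*} [Fintype n] {A : Matrix n n ℂ} {c : ℝ} (hc : 0 < c) :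
    ((c : ℂ) • A).PosSemidef ↔ A.PosSemidef := by
  constructor
  · intro h
    have := aux_psd_smul (c := c⁻¹) (by positivity) h
    rwa [smul_smul, ← Complex.ofReal_mul, inv_mul_cancel₀ hc.ne', Complex.ofReal_one,
      one_smul] at this
  · exact aux_psd_smul hc.le

lemma aux_psd_map_iff {n : Type*} [Fintype n] [DecidableEq n] {A : Matrix n n ℝ} :
    (A.map (Complex.ofRealHom)).PosSemidef ↔ A.PosSemidef := by
  constructor
  · intro h
    rw [Matrix.posSemidef_iff_dotProduct_mulVec]
    constructor
    · ext i j
      have := congr_fun (congr_fun h.1 i) j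
      simp only [conjTranspose_apply, map_apply, Complex.ofRealHom_eq_coe,
        Complex.star_def, Complex.conj_ofReal] at this
      exact_mod_cast this
    · intro x
      have hx := h.dotProduct_mulVec_nonneg (fun i => (x i : ℂ))
      have : (star (fun i => (x i : ℂ)) ⬝ᵥ (A.map Complex.ofRealHom) *ᵥ fun i => (x i : ℂ))
          = ((star x ⬝ᵥ A *ᵥ x : ℝ) : ℂ) := by
        simp only [dotProduct, Matrix.mulVec, Matrix.map_apply, Pi.star_apply,
          Complex.star_def, Complex.conj_ofReal, Complex.ofRealHom_eq_coe, star_trivial]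
        push_cast
        ring
      rw [this] at hx
      have := Complex.zero_le_real.mp hx
      simpa using this
  · intro h
    obtain ⟨m, v, rfl⟩ := Matrix.posSemidef_iff_eq_sum_vecMulVec.mp h
    refine Matrix.posSemidef_iff_eq_sum_vecMulVec.mpr ⟨m, fun i j => ((v i j : ℝ) : ℂ), ?_⟩
    ext a b
    simp [Matrix.sum_apply, vecMulVec_apply]

def Jm (d : ℕ) : Matrix (Fin d × Fin d) (Fin d) ℂ :=
  Matrix.of fun p i => if p.1 = i ∧ p.2 = i then 1 else 0

lemma Jm_entry {d : ℕ} (X : Matrix (Fin d) (Fin d) ℂ) (p q : Fin d × Fin d) :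
    (Jm d * X * (Jm d)ᴴ) p q = if p.1 = p.2 ∧ q.1 = q.2 then X p.1 q.1 else 0 := by
  simp only [Matrix.mul_apply, Matrix.conjTranspose_apply, Jm, Matrix.of_apply,
    ite_and, apply_ite (starRingEnd ℂ), _root_.map_one, _root_.map_zero, ite_mul, mul_ite, zero_mul,
    mul_zero, one_mul, mul_one, Finset.sum_ite_eq, Finset.sum_ite_eq', Finset.mem_univ, if_true]
  split_ifs <;> simp_all [eq_comm]
lemma Jm_JJ {d : ℕ} : (Jm d)ᴴ * Jm d = 1 := by
  ext i k
  simp only [Matrix.mul_apply, Matrix.conjTranspose_apply, Jm, Matrix.of_apply,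
    Fintype.sum_prod_type, ite_and, apply_ite (starRingEnd ℂ), _root_.map_one, _root_.map_zero, ite_mul,
    mul_ite, zero_mul, mul_zero, one_mul, mul_one, Finset.sum_ite_eq, Finset.sum_ite_eq',
    Finset.mem_univ, if_true, Matrix.one_apply]
  split_ifs <;> simp_all [eq_comm]
lemma Jm_DJ {d : ℕ} (f : Fin d × Fin d → ℂ) :
    (Jm d)ᴴ * Matrix.diagonal f * Jm d = Matrix.diagonal (fun i => f (i, i)) := by
  ext i k
  simp only [Matrix.mul_apply, Matrix.conjTranspose_apply, Jm, Matrix.of_apply,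
    Matrix.diagonal_apply, Fintype.sum_prod_type, Prod.ext_iff,
    ite_and, apply_ite (starRingEnd ℂ), _root_.map_one, _root_.map_zero, ite_mul,
    mul_ite, zero_mul, mul_zero, one_mul, mul_one, Finset.sum_ite_eq, Finset.sum_ite_eq',
    Finset.mem_univ, if_true]
  split_ifs <;> simp_all [eq_comm]

lemma aux_diag_nonneg {n : Type*} [Fintype n] [DecidableEq n] {A : Matrix n n ℂ}
    (h : A.PosSemidef) (i : n) : 0 ≤ A i i := by
  have := h.dotProduct_mulVec_nonneg (Pi.single i 1)
  rw [Matrix.mulVec_single] at this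
  simpa [dotProduct, Pi.single_apply, apply_ite (star : ℂ → ℂ)] using this

lemma sum_pull {ι : Type*} [Fintype ι] (c : Prop) [Decidable c] (f : ι → ℂ) :
    (∑ i, if c then f i else 0) = if c then ∑ i, f i else 0 := by split_ifs <;> simp

lemma term1_sum {d : ℕ} (v : Fin d → Fin d → ℂ) (a b c e : Fin d) :
    (∑ x : Fin d, ∑ y : Fin d,
        if x = a then if x = c then if y = b then if y = e then v x y else 0 else 0 else 0 else 0)
    = if a = c ∧ b = e then v a b else 0 := by
  simp only [sum_pull, Finset.sum_ite_eq', Finset.mem_univ, if_true]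
  split_ifs <;> simp_all

lemma term2_sum {d : ℕ} (v : Fin d → Fin d → ℂ) (a b c e : Fin d) :
    (∑ x : Fin d, ∑ y : Fin d, if x = y then 0
      else if x = a then if y = c then if x = b then if y = e then v x y else 0 else 0 else 0 else 0)
    = if a = b ∧ c = e ∧ a ≠ c then v a c else 0 := by
  rw [Finset.sum_congr rfl (fun x _ => Finset.sum_congr rfl (fun y _ =>
    show _ = if x = a then if y = c then (if a = b ∧ c = e ∧ a ≠ c then v a c else 0) else 0 else 0
    from by split_ifs <;> simp_all <;> aesop))]
  simp only [sum_pull, Finset.sum_ite_eq', Finset.mem_univ, if_true]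

/-- The involution `Γ` on matrix units: `(|i,j⟩⟨k,l|)^Γ = |i,k⟩⟨j,l|`. -/
def gammaOp (d : ℕ) (M : Matrix (Fin d × Fin d) (Fin d × Fin d) ℂ) :
    Matrix (Fin d × Fin d) (Fin d × Fin d) ℂ :=
  Matrix.of fun p q => M (p.1, q.1) (p.2, q.2)

set_option maxHeartbeats 2000000 in
/-- for `L = 2π ∑_{i,j} Q_{ij}|i,i⟩⟨j,j| + 2π ∑_{i≠j} P_{ij}|i,j⟩⟨i,j|`
with `Q, P` real and `ω = |ω⟩⟨ω|` the projector onto the maximally entangled vector,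
the ccp condition `(I-ω)L^Γ(I-ω) ≥ 0` holds iff (a) `Q_{ij} ≥ 0` for `i ≠ j` and
(b) `(I - wwᵀ)M(I - wwᵀ) ≥ 0` with `M_{ii} = Q_{ii}`, `M_{i≠j} = P_{ij}`,
`w = (1,…,1)ᵀ/√d`. -/
theorem stmt10 (d : ℕ) (Q P : Matrix (Fin d) (Fin d) ℝ) :
    let L : Matrix (Fin d × Fin d) (Fin d × Fin d) ℂ :=
      (2 * (π : ℂ)) • (∑ i, ∑ j, Matrix.single (i, i) (j, j) ((Q i j : ℝ) : ℂ))
      + (2 * (π : ℂ)) • (∑ i, ∑ j,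
          if i = j then 0 else Matrix.single (i, j) (i, j) ((P i j : ℝ) : ℂ))
    let ωvec : Fin d × Fin d → ℂ := fun p => if p.1 = p.2 then 1 / Real.sqrt d else 0
    let ω : Matrix (Fin d × Fin d) (Fin d × Fin d) ℂ := vecMulVec ωvec (star ωvec)
    let w : Fin d → ℝ := fun _ => 1 / Real.sqrt d
    let M : Matrix (Fin d) (Fin d) ℝ :=
      Matrix.of fun i j => if i = j then Q i i else P i j
    ((1 - ω) * gammaOp d L * (1 - ω)).PosSemidef ↔
      ((∀ i j, i ≠ j → 0 ≤ Q i j) ∧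
        ((1 - vecMulVec w w) * M * (1 - vecMulVec w w)).PosSemidef) := by
  intro L ωvec ω w M
  -- auxiliary matrices
  set J : Matrix (Fin d × Fin d) (Fin d) ℂ := Jm d with hJdef
  set q' : Fin d × Fin d → ℂ := fun p => if p.1 = p.2 then 0 else ((Q p.1 p.2 : ℝ) : ℂ)
    with hq'def
  set Mc : Matrix (Fin d) (Fin d) ℂ := M.map Complex.ofRealHom with hMcdef
  set Wc : Matrix (Fin d) (Fin d) ℂ := (vecMulVec w w).map Complex.ofRealHom with hWcdef
  set Nc : Matrix (Fin d) (Fin d) ℂ :=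
    (((1 - vecMulVec w w) * M * (1 - vecMulVec w w)).map Complex.ofRealHom) with hNcdef
  have hG : gammaOp d L = (2 * (π : ℂ)) • (Matrix.diagonal q' + J * Mc * Jᴴ) := by
    ext ⟨a, b⟩ ⟨c, e⟩
    simp only [gammaOp, Matrix.of_apply]
    show L (a, c) (b, e) = _
    unfold L
    simp only [Matrix.add_apply, Matrix.smul_apply, Matrix.sum_apply, smul_eq_mul,
      Matrix.single, Matrix.of_apply, Prod.mk.injEq, ite_and, apply_ite
        (fun (m : Matrix (Fin d × Fin d) (Fin d × Fin d) ℂ) => m (a, c) (b, e)),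
      Matrix.zero_apply]
    rw [term1_sum, term2_sum]
    rw [hJdef, Jm_entry]
    unfold q' Mc M
    simp only [Matrix.map_apply, Matrix.of_apply, Complex.ofRealHom_eq_coe,
      Matrix.diagonal_apply, Prod.mk.injEq, ite_and]
    split_ifs <;> simp_all <;> ring
  have hωJ : ω * J = J * Wc := by
    ext p i
    unfold ω J Wc w ωvec
    simp only [Matrix.mul_apply, Matrix.vecMulVec_apply, Jm, Matrix.of_apply, Pi.star_apply,
      Matrix.map_apply, Fintype.sum_prod_type, ite_and, ite_mul, mul_ite, zero_mul, mul_zero,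
      one_mul, mul_one, Finset.sum_ite_eq, Finset.sum_ite_eq', Finset.mem_univ, if_true,
      apply_ite (starRingEnd ℂ), apply_ite (star : ℂ → ℂ), star_zero, _root_.map_zero,
      Complex.ofRealHom_eq_coe, sum_pull]
    push_cast
    split_ifs <;> simp_all [Complex.star_def, Complex.conj_ofReal, eq_comm] <;> ring
  have hJω : Jᴴ * ω = Wc * Jᴴ := by
    ext i p
    unfold ω J Wc w ωvec
    simp only [Matrix.mul_apply, Matrix.vecMulVec_apply, Jm, Matrix.of_apply, Pi.star_apply,
      Matrix.conjTranspose_apply, Matrix.map_apply, Fintype.sum_prod_type, ite_and, ite_mul,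
      mul_ite, zero_mul, mul_zero, one_mul, mul_one, Finset.sum_ite_eq, Finset.sum_ite_eq',
      Finset.mem_univ, if_true, apply_ite (starRingEnd ℂ), apply_ite (star : ℂ → ℂ), star_zero,
      _root_.map_zero, _root_.map_one, Complex.ofRealHom_eq_coe, sum_pull]
    by_cases hp : p.1 = p.2
    · rw [if_pos hp, if_pos hp.symm]
      push_cast
      simp [Complex.star_def, Complex.conj_ofReal]
    · rw [if_neg hp, if_neg (fun h => hp h.symm)]
  have hωD : ω * Matrix.diagonal q' = 0 := by
    ext p q
    unfold ω q' ωvec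
    simp only [Matrix.mul_diagonal, Matrix.vecMulVec_apply, Pi.star_apply, Matrix.zero_apply]
    split_ifs <;> simp
  have hDω : Matrix.diagonal q' * ω = 0 := by
    ext p q
    unfold ω q' ωvec
    simp only [Matrix.diagonal_mul, Matrix.vecMulVec_apply, Pi.star_apply, Matrix.zero_apply]
    split_ifs <;> simp
  have hJJ : Jᴴ * J = 1 := by
    rw [hJdef]; exact Jm_JJ
  have hJDJ : Jᴴ * Matrix.diagonal q' * J = 0 := by
    rw [hJdef, Jm_DJ]
    ext i k
    unfold q'
    simp [Matrix.diagonal_apply]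
  have hNc : Nc = (1 - Wc) * Mc * (1 - Wc) := by
    have h1 : (1 - vecMulVec w w).map ⇑Complex.ofRealHom = 1 - Wc := by
      ext i j
      rw [hWcdef]
      simp only [Matrix.map_apply, Matrix.sub_apply, Matrix.one_apply]
      split_ifs <;> simp
    rw [hNcdef, Matrix.map_mul, Matrix.map_mul, h1, ← hMcdef]
  have e1 : (1 - ω) * Matrix.diagonal q' = Matrix.diagonal q' := by
    rw [sub_mul, one_mul, hωD, sub_zero]
  have e2 : Matrix.diagonal q' * (1 - ω) = Matrix.diagonal q' := by
    rw [mul_sub, mul_one, hDω, sub_zero]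
  have e3 : (1 - ω) * J = J * (1 - Wc) := by
    rw [Matrix.sub_mul, Matrix.one_mul, Matrix.mul_sub, Matrix.mul_one, hωJ]
  have e4 : Jᴴ * (1 - ω) = (1 - Wc) * Jᴴ := by
    rw [Matrix.mul_sub, Matrix.mul_one, Matrix.sub_mul, Matrix.one_mul, hJω]
  have hB : (1 - ω) * gammaOp d L * (1 - ω)
      = (2 * (π : ℂ)) • (Matrix.diagonal q' + J * Nc * Jᴴ) := by
    rw [hG, Matrix.mul_smul, Matrix.smul_mul]
    congr 1
    rw [mul_add, add_mul]
    congr 1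
    · rw [e1, e2]
    · have assoc1 : (1 - ω) * (J * Mc * Jᴴ) * (1 - ω)
          = ((1 - ω) * J) * Mc * (Jᴴ * (1 - ω)) := by
        simp only [Matrix.mul_assoc]
      rw [assoc1, e3, e4, hNc]
      simp only [Matrix.mul_assoc]
  rw [hB, show (2 * (π : ℂ)) = ((2 * π : ℝ) : ℂ) by push_cast; ring,
    aux_psd_smul_iff (by positivity)]
  constructor
  · intro h
    constructor
    · intro i j hij
      have hd := aux_diag_nonneg h (i, j)
      have hval : (Matrix.diagonal q' + J * Nc * Jᴴ) (i, j) (i, j) = ((Q i j : ℝ) : ℂ) := by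
        rw [Matrix.add_apply, hJdef, Jm_entry, Matrix.diagonal_apply_eq]
        unfold q'
        simp [hij]
      rw [hval] at hd
      exact Complex.zero_le_real.mp hd
    · have h3 := h.conjTranspose_mul_mul_same J
      have heq : Jᴴ * (Matrix.diagonal q' + J * Nc * Jᴴ) * J = Nc := by
        rw [Matrix.mul_add, Matrix.add_mul, hJDJ]
        have : Jᴴ * (J * Nc * Jᴴ) * J = (Jᴴ * J) * Nc * (Jᴴ * J) := by
          simp only [Matrix.mul_assoc]
        rw [this, hJJ, one_mul, mul_one, zero_add]
      rw [heq, hNcdef] at h3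
      exact aux_psd_map_iff.mp h3
  · rintro ⟨ha, hb⟩
    apply Matrix.PosSemidef.add
    · apply Matrix.PosSemidef.diagonal
      intro p
      unfold q'
      by_cases hp : p.1 = p.2
      · simp [hp]
      · simp only [hp, if_false]
        exact Complex.zero_le_real.mpr (ha p.1 p.2 hp)
    · have := (aux_psd_map_iff.mpr hb).mul_mul_conjTranspose_same J
      rwa [← hNcdef] at this
end

section
/- A Hermiticity-preserving linear map with matrix representation L (so that L^Γ is Hermitian) satisfying ⟨ω|L = 0 and (I-ω)L^Γ(I-ω) ≥ 0 generates a one-parameter semigroup e^{tL}, t ≥ 0, of completely positive trace-preserving maps. -/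
open Matrix Real ComplexOrder

open Filter Topology
open scoped Kronecker

namespace Stmt11Aux

section BanachAlgebra

variable {𝔸 : Type*} [NormedRing 𝔸] [NormOneClass 𝔸] [NormedAlgebra ℂ 𝔸] [CompleteSpace 𝔸]


variable {𝔸 : Type*} [NormedRing 𝔸] [NormOneClass 𝔸] [NormedAlgebra ℂ 𝔸] [CompleteSpace 𝔸]

theorem norm_exp_le (x : 𝔸) : ‖NormedSpace.exp x‖ ≤ Real.exp ‖x‖ := by
  simp only [NormedSpace.exp_eq_tsum ℂ]
  refine (norm_tsum_le_tsum_norm (NormedSpace.norm_expSeries_summable' (𝕂 := ℂ) x)).trans ?_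
  rw [Real.exp_eq_exp_ℝ]
  simp only [NormedSpace.exp_eq_tsum ℝ]
  refine Summable.tsum_le_tsum (fun n => ?_) (NormedSpace.norm_expSeries_summable' (𝕂 := ℂ) x)
    (NormedSpace.expSeries_summable' (𝕂 := ℝ) ‖x‖)
  rw [norm_smul, smul_eq_mul]
  refine mul_le_mul ?_ (norm_pow_le x n) (norm_nonneg _) (by positivity)
  simp

theorem norm_exp_sub_one_sub_le (x : 𝔸) :
    ‖NormedSpace.exp x - 1 - x‖ ≤ ‖x‖ ^ 2 * Real.exp ‖x‖ := by
  have hs : Summable fun n : ℕ => ((n.factorial : ℂ))⁻¹ • x ^ n :=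
    NormedSpace.expSeries_summable' (𝕂 := ℂ) x
  have h0 : NormedSpace.exp x = 1 + (x + ∑' n : ℕ, ((n + 2).factorial : ℂ)⁻¹ • x ^ (n + 2)) := by
    simp only [NormedSpace.exp_eq_tsum ℂ]
    rw [Summable.tsum_eq_zero_add hs]
    congr 1
    · simp
    · rw [Summable.tsum_eq_zero_add (by simpa using (summable_nat_add_iff 1).2 hs)]
      congr 1
      simp
  rw [h0]
  have h1 : (1 : 𝔸) + (x + ∑' n : ℕ, ((n + 2).factorial : ℂ)⁻¹ • x ^ (n + 2)) - 1 - x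
      = ∑' n : ℕ, ((n + 2).factorial : ℂ)⁻¹ • x ^ (n + 2) := by abel
  rw [h1]
  have hsn : Summable fun n : ℕ => ‖((n + 2).factorial : ℂ)⁻¹ • x ^ (n + 2)‖ := by
    simpa using (summable_nat_add_iff (f := fun n => ‖((n.factorial : ℂ))⁻¹ • x ^ n‖) 2).2
      (NormedSpace.norm_expSeries_summable' (𝕂 := ℂ) x)
  refine (norm_tsum_le_tsum_norm hsn).trans ?_
  have hexp : Summable fun n : ℕ => ‖x‖ ^ 2 * ((n.factorial : ℝ)⁻¹ * ‖x‖ ^ n) := by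
    apply Summable.mul_left
    simpa [smul_eq_mul] using NormedSpace.expSeries_summable' (𝕂 := ℝ) ‖x‖
  refine (Summable.tsum_le_tsum (fun n => ?_) hsn hexp).trans ?_
  · rw [norm_smul]
    have hb : ‖x ^ (n + 2)‖ ≤ ‖x‖ ^ (n + 2) := norm_pow_le x (n + 2)
    have hfac : ‖(((n + 2).factorial : ℂ))⁻¹‖ ≤ (n.factorial : ℝ)⁻¹ := by
      rw [norm_inv, RCLike.norm_natCast]
      apply inv_anti₀
      · exact_mod_cast n.factorial_pos
      · exact_mod_cast Nat.factorial_le (by omega)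
    calc ‖(((n + 2).factorial : ℂ))⁻¹‖ * ‖x ^ (n + 2)‖
        ≤ (n.factorial : ℝ)⁻¹ * ‖x‖ ^ (n + 2) :=
          mul_le_mul hfac hb (norm_nonneg _) (by positivity)
      _ = ‖x‖ ^ 2 * ((n.factorial : ℝ)⁻¹ * ‖x‖ ^ n) := by ring
  · rw [tsum_mul_left]
    have he : ∑' n : ℕ, ((n.factorial : ℝ)⁻¹ * ‖x‖ ^ n) = Real.exp ‖x‖ := by
      rw [Real.exp_eq_exp_ℝ]
      simp only [NormedSpace.exp_eq_tsum ℝ, smul_eq_mul]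
    rw [he]

theorem norm_pow_sub_pow_le (X Y : 𝔸) (K : ℝ) (hX : ‖X‖ ≤ K) (hY : ‖Y‖ ≤ K) (hK : 0 ≤ K) :
    ∀ n : ℕ, ‖X ^ (n + 1) - Y ^ (n + 1)‖ ≤ (n + 1) * K ^ n * ‖X - Y‖ := by
  intro n
  induction n with
  | zero => simpa using le_refl _
  | succ n ih =>
    have h : X ^ (n + 2) - Y ^ (n + 2)
        = X ^ (n + 1) * (X - Y) + (X ^ (n + 1) - Y ^ (n + 1)) * Y := by
      simp only [pow_succ]
      noncomm_ring
    rw [h]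
    refine (norm_add_le _ _).trans ?_
    have h1 : ‖X ^ (n + 1) * (X - Y)‖ ≤ K ^ (n + 1) * ‖X - Y‖ := by
      refine (norm_mul_le _ _).trans ?_
      exact mul_le_mul_of_nonneg_right
        ((norm_pow_le X (n + 1)).trans (pow_le_pow_left₀ (norm_nonneg X) hX _)) (norm_nonneg _)
    have h2 : ‖(X ^ (n + 1) - Y ^ (n + 1)) * Y‖ ≤ ((n + 1) * K ^ n * ‖X - Y‖) * K := by
      refine (norm_mul_le _ _).trans ?_
      exact mul_le_mul ih hY (norm_nonneg _) (by positivity)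
    have e1 : ((n : ℝ) + 1) * K ^ n * ‖X - Y‖ * K = ((n : ℝ) + 1) * (K ^ (n + 1) * ‖X - Y‖) := by
      ring
    have e2 : ((n : ℝ) + 1 + 1) * K ^ (n + 1) * ‖X - Y‖
        = K ^ (n + 1) * ‖X - Y‖ + ((n : ℝ) + 1) * (K ^ (n + 1) * ‖X - Y‖) := by ring
    push_cast
    linarith

theorem trotter_aux (M Φ : 𝔸) {n : ℕ} (hn : 1 ≤ n) (a : ℝ)
    (hMΦ : ‖M‖ + ‖Φ‖ ≤ a) :
    ‖(NormedSpace.exp ((n:ℂ)⁻¹ • M) * (1 + (n:ℂ)⁻¹ • Φ)) ^ n - NormedSpace.exp (M + Φ)‖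
      ≤ Real.exp a * (a ^ 2 * (Real.exp a * (1 + a) + 1 + Real.exp a)) / n := by
  have ha : 0 ≤ a := le_trans (by positivity) hMΦ
  have hM : ‖M‖ ≤ a := by have := norm_nonneg Φ; linarith
  have hΦ : ‖Φ‖ ≤ a := by have := norm_nonneg M; linarith
  have hMp : ‖M + Φ‖ ≤ a := (norm_add_le _ _).trans hMΦ
  have hnR : (1:ℝ) ≤ (n:ℝ) := by exact_mod_cast hn
  have hnpos : (0:ℝ) < n := by linarith
  have hann : a / n ≤ a := by
    rw [div_le_iff₀ hnpos]
    nlinarith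
  set X := NormedSpace.exp ((n:ℂ)⁻¹ • M) * (1 + (n:ℂ)⁻¹ • Φ) with hXdef
  set Y := NormedSpace.exp ((n:ℂ)⁻¹ • (M + Φ)) with hYdef
  have hnormsmul : ∀ z : 𝔸, ‖(n:ℂ)⁻¹ • z‖ = ‖z‖ / n := fun z => by
    rw [norm_smul, norm_inv, Complex.norm_natCast, inv_mul_eq_div]
  have hc₁n : ‖(n:ℂ)⁻¹ • M‖ ≤ a / n := by rw [hnormsmul]; gcongr
  have hDn : ‖(n:ℂ)⁻¹ • Φ‖ ≤ a / n := by rw [hnormsmul]; gcongr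
  have hc₂n : ‖(n:ℂ)⁻¹ • (M + Φ)‖ ≤ a / n := by rw [hnormsmul]; gcongr
  -- identity for X - Y
  have hiden : X - Y = (NormedSpace.exp ((n:ℂ)⁻¹ • M) - 1 - (n:ℂ)⁻¹ • M) * (1 + (n:ℂ)⁻¹ • Φ)
      + ((n:ℂ)⁻¹ • M) * ((n:ℂ)⁻¹ • Φ)
      - (NormedSpace.exp ((n:ℂ)⁻¹ • (M + Φ)) - 1 - (n:ℂ)⁻¹ • (M + Φ)) := by
    rw [hXdef, hYdef, smul_add]
    noncomm_ring
    module
  -- bound on X - Y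
  have hXYdiff : ‖X - Y‖ ≤ (a / n) ^ 2 * (Real.exp a * (1 + a) + 1 + Real.exp a) := by
    rw [hiden]
    have h1 : ‖(NormedSpace.exp ((n:ℂ)⁻¹ • M) - 1 - (n:ℂ)⁻¹ • M) * (1 + (n:ℂ)⁻¹ • Φ)‖
        ≤ ((a/n)^2 * Real.exp a) * (1 + a) := by
      refine (norm_mul_le _ _).trans (mul_le_mul ?_ ?_ (norm_nonneg _) (by positivity))
      · refine (norm_exp_sub_one_sub_le _).trans ?_
        have : Real.exp ‖(n:ℂ)⁻¹ • M‖ ≤ Real.exp a := Real.exp_le_exp.2 (hc₁n.trans hann)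
        gcongr
      · refine (norm_add_le _ _).trans ?_
        have : ‖(1:𝔸)‖ = 1 := norm_one
        rw [this]
        gcongr
        exact hDn.trans hann
    have h2 : ‖((n:ℂ)⁻¹ • M) * ((n:ℂ)⁻¹ • Φ)‖ ≤ (a/n)^2 := by
      refine (norm_mul_le _ _).trans ?_
      rw [sq]
      exact mul_le_mul hc₁n hDn (norm_nonneg _) (by positivity)
    have h3 : ‖NormedSpace.exp ((n:ℂ)⁻¹ • (M + Φ)) - 1 - (n:ℂ)⁻¹ • (M + Φ)‖
        ≤ (a/n)^2 * Real.exp a := by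
      refine (norm_exp_sub_one_sub_le _).trans ?_
      have : Real.exp ‖(n:ℂ)⁻¹ • (M+Φ)‖ ≤ Real.exp a := Real.exp_le_exp.2 (hc₂n.trans hann)
      gcongr
    calc ‖_ + _ - _‖ ≤ ‖_ + _‖ + ‖_‖ := norm_sub_le _ _
      _ ≤ (‖_‖ + ‖_‖) + ‖_‖ := by gcongr; exact norm_add_le _ _
      _ ≤ (((a/n)^2 * Real.exp a) * (1 + a) + (a/n)^2) + (a/n)^2 * Real.exp a := by
          gcongr
      _ = (a / n) ^ 2 * (Real.exp a * (1 + a) + 1 + Real.exp a) := by ring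
  -- norm bounds on X and Y
  have hXn : ‖X‖ ≤ Real.exp (a/n) := by
    rw [hXdef]
    refine (norm_mul_le _ _).trans ?_
    have e1 : ‖NormedSpace.exp ((n:ℂ)⁻¹ • M)‖ ≤ Real.exp (‖M‖/n) := by
      simpa [hnormsmul] using norm_exp_le ((n:ℂ)⁻¹ • M)
    have e2 : ‖1 + (n:ℂ)⁻¹ • Φ‖ ≤ Real.exp (‖Φ‖/n) := by
      refine (norm_add_le _ _).trans ?_
      rw [norm_one, hnormsmul]
      linarith [Real.add_one_le_exp (‖Φ‖/n)]
    calc ‖NormedSpace.exp ((n:ℂ)⁻¹ • M)‖ * ‖1 + (n:ℂ)⁻¹ • Φ‖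
        ≤ Real.exp (‖M‖/n) * Real.exp (‖Φ‖/n) := by
          exact mul_le_mul e1 e2 (norm_nonneg _) (Real.exp_pos _).le
      _ = Real.exp (‖M‖/n + ‖Φ‖/n) := (Real.exp_add _ _).symm
      _ ≤ Real.exp (a/n) := by
          apply Real.exp_le_exp.2
          rw [← add_div]
          gcongr
  have hYn : ‖Y‖ ≤ Real.exp (a/n) := by
    rw [hYdef]
    refine (norm_exp_le _).trans ?_
    apply Real.exp_le_exp.2
    rw [hnormsmul]
    gcongr
  -- power bound
  obtain ⟨m, rfl⟩ : ∃ m, n = m + 1 := ⟨n - 1, by omega⟩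
  have hcast : (((m+1 : ℕ)) : ℝ) = (m:ℝ)+1 := by push_cast; ring
  rw [hcast] at hXn hYn hXYdiff ⊢
  have hcne : (((m+1 : ℕ)) : ℂ) ≠ 0 := by exact_mod_cast Nat.succ_ne_zero m
  have hYpow : Y ^ (m+1) = NormedSpace.exp (M + Φ) := by
    letI : NormedAlgebra ℚ 𝔸 := NormedAlgebra.restrictScalars ℚ ℂ 𝔸
    rw [hYdef, ← NormedSpace.exp_nsmul]
    congr 1
    rw [← Nat.cast_smul_eq_nsmul ℂ, smul_smul, mul_inv_cancel₀ hcne, one_smul]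
  set B := Real.exp a * (1 + a) + 1 + Real.exp a with hB
  have hBnn : 0 ≤ B := by
    have := Real.exp_pos a
    rw [hB]; nlinarith
  have hm1 : (0:ℝ) < (m:ℝ)+1 := by positivity
  have hexp_pow : (Real.exp (a/((m:ℝ)+1)))^m ≤ Real.exp a := by
    rw [← Real.exp_nat_mul]
    apply Real.exp_le_exp.2
    rw [← mul_div_assoc, div_le_iff₀ hm1]
    nlinarith [Nat.cast_nonneg (α := ℝ) m]
  calc ‖X ^ (m+1) - NormedSpace.exp (M + Φ)‖
      = ‖X ^ (m+1) - Y ^ (m+1)‖ := by rw [hYpow]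
    _ ≤ ((m:ℝ)+1) * (Real.exp (a/((m:ℝ)+1)))^m * ‖X - Y‖ :=
        norm_pow_sub_pow_le X Y (Real.exp (a/((m:ℝ)+1))) hXn hYn (Real.exp_pos _).le m
    _ ≤ ((m:ℝ)+1) * Real.exp a * ((a/((m:ℝ)+1))^2 * B) := by
        exact mul_le_mul (mul_le_mul_of_nonneg_left hexp_pow (by positivity : (0:ℝ) ≤ (m:ℝ)+1))
          hXYdiff (norm_nonneg _) (by positivity)
    _ = Real.exp a * (a^2 * B) / ((m:ℝ)+1) := by
        field_simp

theorem trotter (M Φ : 𝔸) :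
    Filter.Tendsto
      (fun n : ℕ => (NormedSpace.exp ((n:ℂ)⁻¹ • M) * (1 + (n:ℂ)⁻¹ • Φ)) ^ n)
      Filter.atTop (𝓝 (NormedSpace.exp (M + Φ))) := by
  rw [← tendsto_sub_nhds_zero_iff]
  set a := ‖M‖ + ‖Φ‖ with ha
  refine squeeze_zero_norm' ?_
    (tendsto_const_div_atTop_nhds_zero_nat (Real.exp a * (a ^ 2 * (Real.exp a * (1 + a) + 1 + Real.exp a))))
  filter_upwards [Filter.eventually_ge_atTop 1] with n hn
  exact trotter_aux M Φ hn a le_rfl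


end BanachAlgebra

variable {d : ℕ}


variable {d : ℕ}

/-- reshape a vector on `Fin d × Fin d` into a `d × d` matrix -/
def kmat (d : ℕ) (w : Fin d × Fin d → ℂ) : Matrix (Fin d) (Fin d) ℂ :=
  Matrix.of fun i j => w (i, j)

theorem gammaOp_gammaOp (M : Matrix (Fin d × Fin d) (Fin d × Fin d) ℂ) :
    gammaOp d (gammaOp d M) = M := rfl

theorem gammaOp_add (M N : Matrix (Fin d × Fin d) (Fin d × Fin d) ℂ) :
    gammaOp d (M + N) = gammaOp d M + gammaOp d N := rfl

theorem gammaOp_sub (M N : Matrix (Fin d × Fin d) (Fin d × Fin d) ℂ) :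
    gammaOp d (M - N) = gammaOp d M - gammaOp d N := rfl

theorem gammaOp_smul (z : ℂ) (M : Matrix (Fin d × Fin d) (Fin d × Fin d) ℂ) :
    gammaOp d (z • M) = z • gammaOp d M := rfl

/-- `gammaOp` as a linear map. -/
def gammaLM (d : ℕ) : Matrix (Fin d × Fin d) (Fin d × Fin d) ℂ →ₗ[ℂ]
    Matrix (Fin d × Fin d) (Fin d × Fin d) ℂ where
  toFun := gammaOp d
  map_add' := gammaOp_add
  map_smul' := gammaOp_smul

theorem gammaOp_sum {ι : Type*} (s : Finset ι) (f : ι → Matrix (Fin d × Fin d) (Fin d × Fin d) ℂ) :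
    gammaOp d (∑ i ∈ s, f i) = ∑ i ∈ s, gammaOp d (f i) :=
  map_sum (gammaLM d) f s

theorem gammaOp_continuous : Continuous (gammaOp d) := by
  apply continuous_pi; intro p
  apply continuous_pi; intro q
  exact ((continuous_apply (p.2, q.2)).comp (continuous_apply (p.1, q.1)))

theorem gammaOp_kron (K K' : Matrix (Fin d) (Fin d) ℂ) :
    gammaOp d (K ⊗ₖ K'.map (starRingEnd ℂ))
      = vecMulVec (fun p => K p.1 p.2) (star fun p => K' p.1 p.2) := by
  ext p q
  simp [gammaOp, Matrix.kroneckerMap_apply, vecMulVec_apply, Matrix.map_apply]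

theorem gammaOp_vecMulVec (a b : Fin d × Fin d → ℂ) :
    gammaOp d (vecMulVec a (star b)) = kmat d a ⊗ₖ (kmat d b).map (starRingEnd ℂ) := by
  ext p q
  simp [gammaOp, Matrix.kroneckerMap_apply, vecMulVec_apply, kmat, Matrix.map_apply]

theorem psd_vecMulVec (w : Fin d × Fin d → ℂ) : (vecMulVec w (star w)).PosSemidef := by
  rw [Matrix.vecMulVec_eq Unit, ← Matrix.conjTranspose_replicateCol]
  exact Matrix.posSemidef_self_mul_conjTranspose _

theorem psd_smul {ι : Type*} [Fintype ι] {M : Matrix ι ι ℂ} (h : M.PosSemidef) {r : ℝ}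
    (hr : 0 ≤ r) : ((r : ℂ) • M).PosSemidef := by
  refine Matrix.PosSemidef.of_dotProduct_mulVec_nonneg ?_ ?_
  · unfold Matrix.IsHermitian
    rw [Matrix.conjTranspose_smul, h.1]
    congr 1
    simp
  · intro x
    rw [Matrix.smul_mulVec, dotProduct_smul]
    exact mul_nonneg (by exact_mod_cast hr) (h.dotProduct_mulVec_nonneg x)

theorem psd_sum {ι κ : Type*} [Fintype ι] (s : Finset κ) (f : κ → Matrix ι ι ℂ)
    (h : ∀ k ∈ s, (f k).PosSemidef) : (∑ k ∈ s, f k).PosSemidef := by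
  classical
  induction s using Finset.induction_on with
  | empty => simpa using Matrix.PosSemidef.zero
  | insert a s hk ih =>
    rw [Finset.sum_insert hk]
    exact (h _ (Finset.mem_insert_self _ _)).add
      (ih fun k hks => h k (Finset.mem_insert_of_mem hks))

/-- Every matrix with PSD `Γ` is a sum of Kronecker-conjugate squares. -/
theorem gamma_psd_decomp {N : Matrix (Fin d × Fin d) (Fin d × Fin d) ℂ}
    (h : (gammaOp d N).PosSemidef) :
    ∃ K : (Fin d × Fin d) → Matrix (Fin d) (Fin d) ℂ,
      N = ∑ m : Fin d × Fin d, K m ⊗ₖ (K m).map (starRingEnd ℂ) := by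
  obtain ⟨B, hB⟩ : ∃ B : Matrix (Fin d × Fin d) (Fin d × Fin d) ℂ, gammaOp d N = Bᴴ * B := by
    open scoped Matrix.Norms.L2Operator MatrixOrder in
    exact CStarAlgebra.nonneg_iff_eq_star_mul_self.mp h.nonneg
  refine ⟨fun m => kmat d (star (B m)), ?_⟩
  have h1 : gammaOp d N = ∑ m : Fin d × Fin d, vecMulVec (star (B m)) (star (star (B m))) := by
    rw [hB]
    ext p q
    simp [Matrix.mul_apply, Matrix.conjTranspose_apply, vecMulVec_apply, Matrix.sum_apply]
  calc N = gammaOp d (gammaOp d N) := rfl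
    _ = _ := by
        rw [h1, gammaOp_sum]
        exact Finset.sum_congr rfl fun m _ => gammaOp_vecMulVec _ _

theorem gamma_psd_mul {A B : Matrix (Fin d × Fin d) (Fin d × Fin d) ℂ}
    (hA : (gammaOp d A).PosSemidef) (hB : (gammaOp d B).PosSemidef) :
    (gammaOp d (A * B)).PosSemidef := by
  obtain ⟨K, rfl⟩ := gamma_psd_decomp hA
  obtain ⟨K', rfl⟩ := gamma_psd_decomp hB
  rw [Finset.sum_mul_sum]
  have hterm : ∀ (m n : Fin d × Fin d),
      (K m ⊗ₖ (K m).map (starRingEnd ℂ)) * (K' n ⊗ₖ (K' n).map (starRingEnd ℂ))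
        = (K m * K' n) ⊗ₖ ((K m * K' n).map (starRingEnd ℂ)) := by
    intro m n
    rw [Matrix.map_mul, Matrix.mul_kronecker_mul]
  simp only [hterm]
  rw [gammaOp_sum]
  refine psd_sum _ _ fun m _ => ?_
  rw [gammaOp_sum]
  refine psd_sum _ _ fun n _ => ?_
  rw [gammaOp_kron]
  exact psd_vecMulVec _

theorem gamma_psd_one : (gammaOp d (1 : Matrix (Fin d × Fin d) (Fin d × Fin d) ℂ)).PosSemidef := by
  have h : gammaOp d (1 : Matrix (Fin d × Fin d) (Fin d × Fin d) ℂ)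
      = vecMulVec (fun p : Fin d × Fin d => if p.1 = p.2 then 1 else 0)
        (star fun p : Fin d × Fin d => if p.1 = p.2 then 1 else 0) := by
    ext ⟨p1, p2⟩ ⟨q1, q2⟩
    by_cases h1 : p1 = p2 <;> by_cases h2 : q1 = q2 <;>
      simp [gammaOp, Matrix.one_apply, vecMulVec_apply, Prod.ext_iff, h1, h2]
  rw [h]
  exact psd_vecMulVec _

theorem gamma_psd_pow {A : Matrix (Fin d × Fin d) (Fin d × Fin d) ℂ}
    (hA : (gammaOp d A).PosSemidef) (n : ℕ) : (gammaOp d (A ^ n)).PosSemidef := by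
  induction n with
  | zero => simpa using gamma_psd_one
  | succ n ih => rw [pow_succ]; exact gamma_psd_mul ih hA

theorem psd_limit {ι : Type*} [Fintype ι] {f : ℕ → Matrix ι ι ℂ} {F : Matrix ι ι ℂ}
    (h : Tendsto f atTop (𝓝 F)) (hf : ∀ n, (f n).PosSemidef) : F.PosSemidef := by
  refine Matrix.PosSemidef.of_dotProduct_mulVec_nonneg ?_ ?_
  · have hconj : Tendsto (fun n => (f n)ᴴ) atTop (𝓝 Fᴴ) :=
      (Continuous.matrix_conjTranspose continuous_id).tendsto F |>.comp h
    have heq : (fun n => (f n)ᴴ) = f := funext fun n => (hf n).1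
    rw [heq] at hconj
    exact tendsto_nhds_unique hconj h
  · intro x
    have hc : Tendsto (fun n => dotProduct (star x) (f n *ᵥ x)) atTop
        (𝓝 (dotProduct (star x) (F *ᵥ x))) := by
      have : Continuous fun M : Matrix ι ι ℂ => dotProduct (star x) (M *ᵥ x) :=
        Continuous.dotProduct continuous_const
          (Continuous.matrix_mulVec continuous_id continuous_const)
      exact (this.tendsto F).comp h
    rw [Complex.le_def]
    constructor
    · have hre : Tendsto (fun n => (dotProduct (star x) (f n *ᵥ x)).re) atTop
          (𝓝 (dotProduct (star x) (F *ᵥ x)).re) :=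
        (Complex.continuous_re.tendsto _).comp hc
      refine ge_of_tendsto' hre fun n => ?_
      have := (hf n).dotProduct_mulVec_nonneg x
      rw [Complex.le_def] at this
      simpa using this.1
    · have him : Tendsto (fun n => (dotProduct (star x) (f n *ᵥ x)).im) atTop
          (𝓝 (dotProduct (star x) (F *ᵥ x)).im) :=
        (Complex.continuous_im.tendsto _).comp hc
      have heq : (fun n => (dotProduct (star x) (f n *ᵥ x)).im) = fun _ => (0:ℝ) := by
        funext n
        have := (hf n).dotProduct_mulVec_nonneg x
        rw [Complex.le_def] at this
        simpa using this.2.symm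
      rw [heq] at him
      simpa using tendsto_nhds_unique him tendsto_const_nhds |>.symm

/-- `X ↦ X ⊗ₖ 1` as a ring hom. -/
def kronL (d : ℕ) : Matrix (Fin d) (Fin d) ℂ →+* Matrix (Fin d × Fin d) (Fin d × Fin d) ℂ where
  toFun X := X ⊗ₖ (1 : Matrix (Fin d) (Fin d) ℂ)
  map_one' := Matrix.one_kronecker_one
  map_mul' X Y := by rw [← Matrix.mul_kronecker_mul, one_mul]
  map_zero' := Matrix.zero_kronecker 1
  map_add' X Y := Matrix.add_kronecker X Y 1

/-- `X ↦ 1 ⊗ₖ X` as a ring hom. -/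
def kronR (d : ℕ) : Matrix (Fin d) (Fin d) ℂ →+* Matrix (Fin d × Fin d) (Fin d × Fin d) ℂ where
  toFun X := (1 : Matrix (Fin d) (Fin d) ℂ) ⊗ₖ X
  map_one' := Matrix.one_kronecker_one
  map_mul' X Y := by rw [← Matrix.mul_kronecker_mul, one_mul]
  map_zero' := Matrix.kronecker_zero 1
  map_add' X Y := Matrix.kronecker_add 1 X Y

theorem kronL_continuous : Continuous (kronL d) := by
  apply continuous_pi; intro p
  apply continuous_pi; intro q
  show Continuous fun X : Matrix (Fin d) (Fin d) ℂ =>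
    X p.1 q.1 * (1 : Matrix (Fin d) (Fin d) ℂ) p.2 q.2
  exact (continuous_apply_apply p.1 q.1).mul continuous_const

theorem kronR_continuous : Continuous (kronR d) := by
  apply continuous_pi; intro p
  apply continuous_pi; intro q
  show Continuous fun X : Matrix (Fin d) (Fin d) ℂ =>
    (1 : Matrix (Fin d) (Fin d) ℂ) p.1 q.1 * X p.2 q.2
  exact continuous_const.mul ((continuous_apply q.2).comp (continuous_apply p.2))

theorem exp_map_conj (A : Matrix (Fin d) (Fin d) ℂ) :
    NormedSpace.exp (A.map (starRingEnd ℂ)) = (NormedSpace.exp A).map (starRingEnd ℂ) := by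
  have h1 : A.map (starRingEnd ℂ) = (Aᴴ)ᵀ := by
    ext i j; simp [Matrix.conjTranspose_apply, Matrix.map_apply]
  have h2 : ((NormedSpace.exp A)ᴴ)ᵀ = (NormedSpace.exp A).map (starRingEnd ℂ) := by
    ext i j; simp [Matrix.conjTranspose_apply, Matrix.map_apply]
  rw [h1, Matrix.exp_transpose, Matrix.exp_conjTranspose, h2]

theorem gamma_exp_kron (A : Matrix (Fin d) (Fin d) ℂ) :
    (gammaOp d (NormedSpace.exp
      (A ⊗ₖ (1 : Matrix (Fin d) (Fin d) ℂ)
        + (1 : Matrix (Fin d) (Fin d) ℂ) ⊗ₖ A.map (starRingEnd ℂ)))).PosSemidef := by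
  letI : SeminormedRing (Matrix (Fin d) (Fin d) ℂ) := Matrix.linftyOpSemiNormedRing
  letI : NormedRing (Matrix (Fin d) (Fin d) ℂ) := Matrix.linftyOpNormedRing
  letI : NormedAlgebra ℂ (Matrix (Fin d) (Fin d) ℂ) := Matrix.linftyOpNormedAlgebra
  letI : NormedAlgebra ℚ (Matrix (Fin d) (Fin d) ℂ) := NormedAlgebra.restrictScalars ℚ ℂ _
  letI : SeminormedRing (Matrix (Fin d × Fin d) (Fin d × Fin d) ℂ) := Matrix.linftyOpSemiNormedRing
  letI : NormedRing (Matrix (Fin d × Fin d) (Fin d × Fin d) ℂ) := Matrix.linftyOpNormedRing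
  letI : NormedAlgebra ℂ (Matrix (Fin d × Fin d) (Fin d × Fin d) ℂ) := Matrix.linftyOpNormedAlgebra
  have hcomm : Commute (A ⊗ₖ (1 : Matrix (Fin d) (Fin d) ℂ))
      ((1 : Matrix (Fin d) (Fin d) ℂ) ⊗ₖ A.map (starRingEnd ℂ)) := by
    unfold Commute SemiconjBy
    rw [← Matrix.mul_kronecker_mul, ← Matrix.mul_kronecker_mul, one_mul, mul_one, one_mul, mul_one]
  rw [Matrix.exp_add_of_commute _ _ hcomm]
  have hL : NormedSpace.exp (A ⊗ₖ (1 : Matrix (Fin d) (Fin d) ℂ))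
      = NormedSpace.exp A ⊗ₖ (1 : Matrix (Fin d) (Fin d) ℂ) :=
    (NormedSpace.map_exp (kronL d) kronL_continuous A).symm
  have hR : NormedSpace.exp ((1 : Matrix (Fin d) (Fin d) ℂ) ⊗ₖ A.map (starRingEnd ℂ))
      = (1 : Matrix (Fin d) (Fin d) ℂ) ⊗ₖ (NormedSpace.exp A).map (starRingEnd ℂ) := by
    rw [show (1 : Matrix (Fin d) (Fin d) ℂ) ⊗ₖ A.map (starRingEnd ℂ)
        = kronR d (A.map (starRingEnd ℂ)) from rfl]
    refine (NormedSpace.map_exp (kronR d) kronR_continuous _).symm.trans ?_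
    exact congrArg (kronR d) (exp_map_conj A)
  rw [hL, hR, ← Matrix.mul_kronecker_mul, one_mul, mul_one, gammaOp_kron]
  exact psd_vecMulVec _

theorem vecMulVec_mul {ι : Type*} [Fintype ι] (a b : ι → ℂ) (X : Matrix ι ι ℂ) :
    vecMulVec a b * X = vecMulVec a (b ᵥ* X) := by
  ext i j
  simp [Matrix.mul_apply, vecMulVec_apply, Matrix.vecMul, dotProduct, Finset.mul_sum,
    mul_assoc]

theorem mul_vecMulVec {ι : Type*} [Fintype ι] (X : Matrix ι ι ℂ) (a b : ι → ℂ) :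
    X * vecMulVec a b = vecMulVec (X *ᵥ a) b := by
  ext i j
  simp [Matrix.mul_apply, vecMulVec_apply, Matrix.mulVec, dotProduct, Finset.sum_mul,
    mul_assoc]

theorem vecMul_vecMulVec {ι : Type*} [Fintype ι] (b u v : ι → ℂ) :
    b ᵥ* vecMulVec u v = (b ⬝ᵥ u) • v := by
  funext j
  simp [Matrix.vecMul, vecMulVec_apply, dotProduct, Finset.sum_mul, mul_assoc]

theorem vecMul_smul_mat {ι κ : Type*} [Fintype ι] (v : ι → ℂ) (z : ℂ) (A : Matrix ι κ ℂ) :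
    v ᵥ* (z • A) = z • (v ᵥ* A) := by
  funext j
  simp [Matrix.vecMul, dotProduct, Finset.mul_sum, mul_left_comm]

theorem herm_star_vecMul {ι : Type*} [Fintype ι] {X : Matrix ι ι ℂ} (hX : X.IsHermitian)
    (h : ι → ℂ) : star h ᵥ* X = star (X *ᵥ h) := by
  funext q
  simp only [Matrix.vecMul, Matrix.mulVec, dotProduct, Pi.star_apply, star_sum, star_mul',
    Pi.star_apply]
  exact Finset.sum_congr rfl fun r _ => by rw [hX.apply, mul_comm]

theorem smul_rep (z : ℂ) (hz : starRingEnd ℂ z = z) (A : Matrix (Fin d) (Fin d) ℂ) :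
    z • (A ⊗ₖ (1 : Matrix (Fin d) (Fin d) ℂ)
        + (1 : Matrix (Fin d) (Fin d) ℂ) ⊗ₖ A.map (starRingEnd ℂ))
      = (z • A) ⊗ₖ (1 : Matrix (Fin d) (Fin d) ℂ)
        + (1 : Matrix (Fin d) (Fin d) ℂ) ⊗ₖ (z • A).map (starRingEnd ℂ) := by
  ext ⟨i, j⟩ ⟨k, l⟩
  simp only [Matrix.add_apply, Matrix.smul_apply, Matrix.kroneckerMap_apply, Matrix.map_apply,
    Matrix.one_apply, Matrix.smul_apply, smul_eq_mul, _root_.map_mul, hz]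
  by_cases h1 : i = k <;> by_cases h2 : j = l <;> simp [h1, h2, hz] <;> ring

/-- structure of the non-dissipative part -/
theorem rep_structure (w : Fin d × Fin d → ℂ) (c : ℂ) (hc : starRingEnd ℂ c = c) (r : ℝ) :
    gammaOp d (vecMulVec (fun p : Fin d × Fin d => if p.1 = p.2 then ((r : ℝ) : ℂ) else 0) (star w)
      + vecMulVec w (star fun p : Fin d × Fin d => if p.1 = p.2 then ((r : ℝ) : ℂ) else 0)
      - c • vecMulVec (fun p : Fin d × Fin d => if p.1 = p.2 then ((r : ℝ) : ℂ) else 0)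
          (star fun p : Fin d × Fin d => if p.1 = p.2 then ((r : ℝ) : ℂ) else 0))
    = ((r : ℂ) • kmat d w - (c * (r : ℂ) ^ 2 / 2) • 1) ⊗ₖ (1 : Matrix (Fin d) (Fin d) ℂ)
      + (1 : Matrix (Fin d) (Fin d) ℂ)
        ⊗ₖ ((r : ℂ) • kmat d w - (c * (r : ℂ) ^ 2 / 2) • 1).map (starRingEnd ℂ) := by
  ext ⟨i, j⟩ ⟨k, l⟩
  simp only [gammaOp, Matrix.of_apply, Matrix.add_apply, Matrix.sub_apply, Matrix.smul_apply,
    vecMulVec_apply, Pi.star_apply, Matrix.kroneckerMap_apply, Matrix.map_apply,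
    Matrix.one_apply, kmat, smul_eq_mul, map_sub, _root_.map_mul, map_ofNat, map_pow, map_div₀, hc,
    Complex.conj_ofReal, MonoidWithZeroHom.map_ite_one_zero]
  by_cases h1 : i = k <;> by_cases h2 : j = l <;>
    simp [h1, h2, Matrix.one_apply, hc, Complex.conj_ofReal, map_div₀, map_ofNat, mul_comm] <;> ring

end Stmt11Aux

open Stmt11Aux

/-- if `L` (the matrix representation of a Hermiticity-preserving
superoperator, i.e. `L^Γ` Hermitian) satisfies the normalisation `⟨ω|L = 0` and
conditional complete positivity `(I-ω)L^Γ(I-ω) ≥ 0`, then for every `t ≥ 0` the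
map represented by `e^{tL}` is completely positive (Choi matrix `(e^{tL})^Γ ≥ 0`)
and trace preserving (`⟨ω|e^{tL} = ⟨ω|`): `L` generates a one-parameter semigroup
of CPT maps. -/
theorem stmt11 (d : ℕ) (L : Matrix (Fin d × Fin d) (Fin d × Fin d) ℂ)
    (ωvec : Fin d × Fin d → ℂ)
    (hω : ωvec = fun p : Fin d × Fin d => if p.1 = p.2 then ((1 / Real.sqrt d : ℝ) : ℂ) else 0)
    (hHerm : (gammaOp d L).IsHermitian)
    (hnorm : Matrix.vecMul (star ωvec) L = 0)
    (hccp : ((1 - vecMulVec ωvec (star ωvec)) * gammaOp d L *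
        (1 - vecMulVec ωvec (star ωvec))).PosSemidef) :
    ∀ t : ℝ, 0 ≤ t →
      (gammaOp d (NormedSpace.exp ((t : ℂ) • L))).PosSemidef ∧
      Matrix.vecMul (star ωvec) (NormedSpace.exp ((t : ℂ) • L)) = star ωvec := by
  intro t ht
  by_cases hd0 : d = 0
  · subst hd0
    constructor
    · exact Matrix.PosSemidef.of_dotProduct_mulVec_nonneg (by ext p q; exact p.1.elim0) fun x => by simp [dotProduct]
    · funext p; exact p.1.elim0
  haveI : Nonempty (Fin d) := ⟨⟨0, Nat.pos_of_ne_zero hd0⟩⟩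
  letI : SeminormedRing (Matrix (Fin d × Fin d) (Fin d × Fin d) ℂ) := Matrix.linftyOpSemiNormedRing
  letI : NormedRing (Matrix (Fin d × Fin d) (Fin d × Fin d) ℂ) := Matrix.linftyOpNormedRing
  letI : NormedAlgebra ℂ (Matrix (Fin d × Fin d) (Fin d × Fin d) ℂ) := Matrix.linftyOpNormedAlgebra
  set Pm : Matrix (Fin d × Fin d) (Fin d × Fin d) ℂ := 1 - vecMulVec ωvec (star ωvec) with hPm
  set Φm := gammaOp d (Pm * gammaOp d L * Pm) with hΦm
  set w := gammaOp d L *ᵥ ωvec with hw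
  set c := star w ⬝ᵥ ωvec with hcdef
  set r : ℝ := 1 / Real.sqrt d with hrdef
  set A₀ := (r : ℂ) • kmat d w - (c * (r : ℂ) ^ 2 / 2) • (1 : Matrix (Fin d) (Fin d) ℂ) with hA₀
  have hsv : star ωvec ᵥ* gammaOp d L = star w := by rw [herm_star_vecMul hHerm, hw]
  have hc : starRingEnd ℂ c = c := by
    have h1 : starRingEnd ℂ c = star ωvec ⬝ᵥ w := by
      rw [hcdef]
      simp [dotProduct, map_sum, mul_comm]
    have h2 : star ωvec ⬝ᵥ w = c := by
      rw [hw, dotProduct_mulVec, hsv, hcdef]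
    rw [h1, h2]
  have hγ : gammaOp d (L - Φm) =
      vecMulVec ωvec (star w) + vecMulVec w (star ωvec) - c • vecMulVec ωvec (star ωvec) := by
    rw [gammaOp_sub, hΦm, gammaOp_gammaOp, hPm]
    have hexp : (1 - vecMulVec ωvec (star ωvec)) * gammaOp d L * (1 - vecMulVec ωvec (star ωvec))
        = gammaOp d L - vecMulVec ωvec (star ωvec) * gammaOp d L
          - gammaOp d L * vecMulVec ωvec (star ωvec)
          + vecMulVec ωvec (star ωvec) * gammaOp d L * vecMulVec ωvec (star ωvec) := by
      noncomm_ring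
    have hsm : vecMulVec ωvec (c • star ωvec) = c • vecMulVec ωvec (star ωvec) := by
      ext p q
      simp [vecMulVec_apply, mul_left_comm]
    rw [hexp, Stmt11Aux.vecMulVec_mul, hsv, Stmt11Aux.mul_vecMulVec, ← hw,
      Stmt11Aux.vecMulVec_mul, Stmt11Aux.vecMul_vecMulVec, ← hcdef, hsm]
    abel
  have hML : L - Φm = A₀ ⊗ₖ (1 : Matrix (Fin d) (Fin d) ℂ)
      + (1 : Matrix (Fin d) (Fin d) ℂ) ⊗ₖ A₀.map (starRingEnd ℂ) := by
    have h1 := congrArg (gammaOp d) hγ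
    rw [gammaOp_gammaOp] at h1
    rw [h1, hω, hA₀, hrdef]
    exact rep_structure w c hc (1 / Real.sqrt d)
  constructor
  · -- complete positivity of exp (t L)
    have htrot := trotter ((t:ℂ) • (L - Φm)) ((t:ℂ) • Φm)
    have hsum : (t:ℂ) • (L - Φm) + (t:ℂ) • Φm = (t:ℂ) • L := by
      rw [← smul_add, sub_add_cancel]
    rw [hsum] at htrot
    refine psd_limit ((gammaOp_continuous.tendsto _).comp htrot) fun n => ?_
    apply gamma_psd_pow
    apply gamma_psd_mul
    · have hsc : (n:ℂ)⁻¹ • ((t:ℂ) • (L - Φm)) = (((t/n : ℝ) : ℂ)) • (L - Φm) := by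
        rw [smul_smul]
        congr 1
        push_cast
        ring
      rw [hsc, hML, smul_rep _ (Complex.conj_ofReal _) _]
      exact gamma_exp_kron _
    · have hsc : (n:ℂ)⁻¹ • ((t:ℂ) • Φm) = (((t/n : ℝ) : ℂ)) • Φm := by
        rw [smul_smul]
        congr 1
        push_cast
        ring
      rw [hsc, gammaOp_add, gammaOp_smul, hΦm, gammaOp_gammaOp]
      exact gamma_psd_one.add (psd_smul hccp (div_nonneg ht n.cast_nonneg))
  · -- trace preservation
    have hhs : HasSum (fun n : ℕ => ((n.factorial : ℂ))⁻¹ • ((t:ℂ) • L) ^ n)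
        (NormedSpace.exp ((t:ℂ) • L)) := NormedSpace.exp_series_hasSum_exp' _
    let f : Matrix (Fin d × Fin d) (Fin d × Fin d) ℂ →ₗ[ℂ] (Fin d × Fin d → ℂ) :=
      { toFun := fun A => star ωvec ᵥ* A
        map_add' := fun A B => Matrix.vecMul_add A B (star ωvec)
        map_smul' := fun z A => by simpa using vecMul_smul_mat (star ωvec) z A }
    have h2 := hhs.mapL (LinearMap.toContinuousLinearMap f)
    have hzero : ∀ n : ℕ, n ≠ 0 →
        star ωvec ᵥ* (((n.factorial : ℂ))⁻¹ • ((t:ℂ) • L) ^ n) = 0 := by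
      intro n hn
      obtain ⟨m, rfl⟩ : ∃ m, n = m + 1 := ⟨n - 1, by omega⟩
      clear hn
      have hLp : star ωvec ᵥ* L ^ (m+1) = 0 := by
        induction m with
        | zero => simpa using hnorm
        | succ k ih => rw [pow_succ, ← Matrix.vecMul_vecMul, ih, Matrix.zero_vecMul]
      rw [vecMul_smul_mat, smul_pow, vecMul_smul_mat, hLp]
      simp
    have h3 : HasSum (fun n : ℕ => star ωvec ᵥ* (((n.factorial : ℂ))⁻¹ • ((t:ℂ) • L) ^ n))
        (star ωvec) := by
      have h4 := hasSum_single
        (f := fun n : ℕ => star ωvec ᵥ* (((n.factorial : ℂ))⁻¹ • ((t:ℂ) • L) ^ n)) 0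
        (fun b hb => hzero b hb)
      simpa [vecMul_smul_mat, Matrix.vecMul_one] using h4
    exact h2.unique h3
end

section
/- Any finite set of linearly independent vectors v₁,…,v_V in ℝ^n can be extended (by appending additional coordinates, i.e., embedding into ℝ^{n'} for some n' ≥ n with the original coordinates preserved) to a set of mutually orthogonal vectors all having the same Euclidean norm. -/
open Matrix

/-- any linearly independent family `v₁,…,v_V ∈ ℝ^n` can be
extended, by appending additional coordinates (embedding into `ℝ^{n'}`, `n' ≥ n`,
with the original coordinates preserved), to a family of mutually orthogonal
vectors all having the same Euclidean norm. -/
theorem stmt14 (V n : ℕ) (v : Fin V → Fin n → ℝ)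
    (hli : LinearIndependent ℝ v) :
    ∃ (n' : ℕ) (hn : n ≤ n') (v' : Fin V → Fin n' → ℝ),
      (∀ (c : Fin V) (i : Fin n), v' c (Fin.castLE hn i) = v c i) ∧
      (∀ c c', c ≠ c' → v' c ⬝ᵥ v' c' = 0) ∧
      (∀ c c', v' c ⬝ᵥ v' c = v' c' ⬝ᵥ v' c') := by
  classical
  -- Gram matrix
  set G : Matrix (Fin V) (Fin V) ℝ := Matrix.of (fun c c' => v c ⬝ᵥ v c') with hG
  set L : ℝ := ∑ c : Fin V, ∑ c' : Fin V, |G c c'| with hL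
  set A : Matrix (Fin V) (Fin V) ℝ := L • (1 : Matrix (Fin V) (Fin V) ℝ) - G with hAdef
  have hGsymm : ∀ c c', G c c' = G c' c := by
    intro c c'
    simp only [hG, Matrix.of_apply]
    exact dotProduct_comm _ _
  have hA : A.PosSemidef := by
    rw [Matrix.posSemidef_iff_dotProduct_mulVec]
    constructor
    · -- Hermitian
      ext c c'
      simp [hAdef, Matrix.conjTranspose_apply, Matrix.one_apply, hGsymm c c',
        eq_comm (a := c) (b := c')]
    · intro x
      have hxb : ∀ c c' : Fin V, |x c * x c'| ≤ x ⬝ᵥ x := by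
        intro c c'
        have h1 : (x c)^2 ≤ x ⬝ᵥ x := by
          have := Finset.single_le_sum (f := fun i => x i * x i)
            (fun i _ => mul_self_nonneg (x i)) (Finset.mem_univ c)
          simpa [dotProduct, sq] using this
        have h2 : (x c')^2 ≤ x ⬝ᵥ x := by
          have := Finset.single_le_sum (f := fun i => x i * x i)
            (fun i _ => mul_self_nonneg (x i)) (Finset.mem_univ c')
          simpa [dotProduct, sq] using this
        nlinarith [abs_mul (x c) (x c'), sq_abs (x c), sq_abs (x c'),
          abs_nonneg (x c), abs_nonneg (x c'), sq_nonneg (|x c| - |x c'|)]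
      have hquad : x ⬝ᵥ (G *ᵥ x) ≤ L * (x ⬝ᵥ x) := by
        have expand : x ⬝ᵥ (G *ᵥ x) = ∑ c : Fin V, ∑ c' : Fin V, x c * (G c c' * x c') := by
          simp [dotProduct, Matrix.mulVec, dotProduct, Finset.mul_sum]
        rw [expand, hL, Finset.sum_mul]
        apply Finset.sum_le_sum
        intro c _
        rw [Finset.sum_mul]
        apply Finset.sum_le_sum
        intro c' _
        have h1 : x c * (G c c' * x c') ≤ |G c c'| * |x c * x c'| := by
          calc x c * (G c c' * x c') = G c c' * (x c * x c') := by ring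
          _ ≤ |G c c' * (x c * x c')| := le_abs_self _
          _ = |G c c'| * |x c * x c'| := abs_mul _ _
        calc x c * (G c c' * x c') ≤ |G c c'| * |x c * x c'| := h1
          _ ≤ |G c c'| * (x ⬝ᵥ x) := by
              exact mul_le_mul_of_nonneg_left (hxb c c') (abs_nonneg _)
      have : star x ⬝ᵥ (A *ᵥ x) = L * (x ⬝ᵥ x) - x ⬝ᵥ (G *ᵥ x) := by
        simp [hAdef, Matrix.sub_mulVec, dotProduct_sub, Matrix.smul_mulVec,
          dotProduct_smul, smul_eq_mul]
      rw [this]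
      linarith
  -- symmetric square root
  set S : Matrix (Fin V) (Fin V) ℝ := (open scoped MatrixOrder in CFC.sqrt A) with hS
  have hSsymm : ∀ i j, S i j = S j i := by
    intro i j
    have h := (open scoped MatrixOrder in (CFC.sqrt_nonneg A).posSemidef.1)
    have := congrFun (congrFun h j) i
    simpa [Matrix.conjTranspose_apply] using this
  have hSS : S * S = A := (open scoped MatrixOrder in CFC.sqrt_mul_sqrt_self A hA.nonneg)
  have key : ∀ c c' : Fin V,
      (Fin.append (v c) (S c)) ⬝ᵥ (Fin.append (v c') (S c')) =
        L * (if c = c' then 1 else 0) := by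
    intro c c'
    have hsplit : (Fin.append (v c) (S c)) ⬝ᵥ (Fin.append (v c') (S c')) =
        v c ⬝ᵥ v c' + S c ⬝ᵥ S c' := by
      rw [dotProduct, Fin.sum_univ_add]
      simp [dotProduct, Fin.append_left, Fin.append_right]
    have hSdot : S c ⬝ᵥ S c' = A c c' := by
      rw [← hSS]
      simp only [Matrix.mul_apply, dotProduct]
      exact Finset.sum_congr rfl fun j _ => by rw [hSsymm j c']
    rw [hsplit, hSdot]
    simp only [hAdef, Matrix.sub_apply, Matrix.smul_apply, Matrix.one_apply, hG,
      Matrix.of_apply, smul_eq_mul]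
    by_cases h : c = c' <;> simp [h] <;> ring
  refine ⟨n + V, Nat.le_add_right n V, fun c => Fin.append (v c) (S c), ?_, ?_, ?_⟩
  · intro c i
    exact Fin.append_left (v c) (S c) i
  · intro c c' hne
    have := key c c'
    simp only [if_neg hne, mul_zero] at this
    exact this
  · intro c c'
    have h1 := key c c
    have h2 := key c' c'
    simp only [if_pos rfl, mul_one] at h1 h2
    rw [h1, h2]
end
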